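/- Let E be a directed graph and A = KE its path algebra. A left ideal I of A is minimal if and only if I = Kx where x = Σ k_i λ_i is a nonzero linear combination of distinct paths λ_i all having the same source v, and v is a source of E (i.e., r^{-1}(v) = ∅). Moreover, for two such elements x, x', Kx ≅ Kx' as left A-modules if and only if all the paths involved share the same source vertex. -/

import Mathlib

/-- A directed graph: vertices, edges, source and range maps. -/
structure DGraph : Type 1 where
  V : Type
  Edge : Type
  s : Edge → V
  r : Edge → V

namespace DGraph

/-- A list of edges is composable if consecutive edges match up. -/
def IsComposable (G : DGraph) (l : List G.Edge) : Prop :=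
  l.Chain' (fun e f => G.r e = G.s f)

/-- A path in `G`: either a trivial path at a vertex, or a nonempty composable list of edges. -/
def GPath (G : DGraph) : Type :=
  G.V ⊕ {l : List G.Edge // l ≠ [] ∧ G.IsComposable l}

namespace GPath

variable {G : DGraph}

/-- The source of a path. -/
def src : GPath G → G.V
  | Sum.inl v => v
  | Sum.inr l => G.s (l.1.head l.2.1)

/-- The range of a path. -/
def rng : GPath G → G.V
  | Sum.inl v => v
  | Sum.inr l => G.r (l.1.getLast l.2.1)

/-- The length of a path. -/
def length : GPath G → ℕ
  | Sum.inl _ => 0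
  | Sum.inr l => l.1.length

/-- The trivial path at a vertex. -/
def ofVertex (v : G.V) : GPath G := Sum.inl v

/-- The length-one path given by an edge. -/
def ofEdge (e : G.Edge) : GPath G :=
  Sum.inr ⟨[e], by simp [IsComposable, List.Chain']⟩

/-- Concatenation of composable paths. -/
def comp : (p q : GPath G) → p.rng = q.src → GPath G
  | Sum.inl _, q, _ => q
  | Sum.inr l, Sum.inl _, _ => Sum.inr l
  | Sum.inr l, Sum.inr m, h => Sum.inr ⟨l.1 ++ m.1, by
      refine ⟨by simp [l.2.1], l.2.2.append m.2.2 ?_⟩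
      intro x hx y hy
      rw [List.getLast?_eq_some_getLast l.2.1] at hx
      rw [List.head?_eq_some_head m.2.1] at hy
      cases hx
      cases hy
      exact h⟩

end GPath

end DGraph

open DGraph

/-- A realization of the path algebra of the graph `G` over the field `K`:
a `K`-algebra with a basis indexed by the paths of `G`, multiplying by concatenation. -/
structure PathAlgebraOn (K : Type) [Field K] (G : DGraph) (A : Type)
    [NonUnitalRing A] [Module K A] where
  basis : Module.Basis (GPath G) K A
  mul_comp : ∀ (p q : GPath G) (h : p.rng = q.src),
      basis p * basis q = basis (p.comp q h)
  mul_ncomp : ∀ p q : GPath G, p.rng ≠ q.src → basis p * basis q = 0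

/-- A `K`-subspace of `A` which is a left ideal. -/
def IsLeftIdeal (K : Type) [Field K] (A : Type) [NonUnitalRing A] [Module K A]
    (S : Submodule K A) : Prop :=
  ∀ a : A, ∀ x ∈ S, a * x ∈ S

/-- A `K`-subspace of `A` which is a right ideal. -/
def IsRightIdeal (K : Type) [Field K] (A : Type) [NonUnitalRing A] [Module K A]
    (S : Submodule K A) : Prop :=
  ∀ a : A, ∀ x ∈ S, x * a ∈ S

/-- The descending chain condition on left ideals. -/
def IsLeftArtinianAlg (K : Type) [Field K] (A : Type) [NonUnitalRing A] [Module K A] : Prop :=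
  ∀ f : ℕ → Submodule K A, (∀ m, IsLeftIdeal K A (f m)) → (∀ m, f (m + 1) ≤ f m) →
    ∃ m, ∀ l, m ≤ l → f l = f m

/-- The ascending chain condition on left ideals. -/
def IsLeftNoetherianAlg (K : Type) [Field K] (A : Type) [NonUnitalRing A] [Module K A] : Prop :=
  ∀ f : ℕ → Submodule K A, (∀ m, IsLeftIdeal K A (f m)) → (∀ m, f m ≤ f (m + 1)) →
    ∃ m, ∀ l, m ≤ l → f l = f m

/-- A minimal left ideal: nonzero, and containing no nonzero proper left subideal. -/
def IsMinimalLeftIdeal (K : Type) [Field K] (A : Type) [NonUnitalRing A] [Module K A]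
    (S : Submodule K A) : Prop :=
  IsLeftIdeal K A S ∧ S ≠ ⊥ ∧
    ∀ T : Submodule K A, IsLeftIdeal K A T → T ≤ S → T = ⊥ ∨ T = S

/-- A minimal right ideal. -/
def IsMinimalRightIdeal (K : Type) [Field K] (A : Type) [NonUnitalRing A] [Module K A]
    (S : Submodule K A) : Prop :=
  IsRightIdeal K A S ∧ S ≠ ⊥ ∧
    ∀ T : Submodule K A, IsRightIdeal K A T → T ≤ S → T = ⊥ ∨ T = S

/-- `x` is a nonzero linear combination of paths all starting at the vertex `v`,
and `v` is a source of the graph. -/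
def SourceSupported {K : Type} [Field K] {G : DGraph} {A : Type} [NonUnitalRing A]
    [Module K A] (PA : PathAlgebraOn K G A) (v : G.V) (x : A) : Prop :=
  (∀ e : G.Edge, G.r e ≠ v) ∧ ∀ p : GPath G, PA.basis.repr x p ≠ 0 → p.src = v


section Stmt10Aux
set_option linter.unusedSectionVars false

open DGraph

variable {K : Type} [Field K] {G : DGraph} {A : Type} [NonUnitalRing A]
  [Module K A] [SMulCommClass K A A] [IsScalarTower K A A] (PA : PathAlgebraOn K G A)

lemma GPath.comp_length (p q : GPath G) (h : p.rng = q.src) :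
    (p.comp q h).length = p.length + q.length := by
  cases p with
  | inl v => simp [GPath.comp, GPath.length]
  | inr l =>
    cases q with
    | inl w => simp [GPath.comp, GPath.length]
    | inr m => simp [GPath.comp, GPath.length]

/-- The subspace of elements supported on paths of length at least `n`. -/
def lenIdeal (n : ℕ) : Submodule K A where
  carrier := {y | ∀ p : GPath G, PA.basis.repr y p ≠ 0 → n ≤ p.length}
  zero_mem' := by intro p hp; simp at hp
  add_mem' := by
    intro y z hy hz p hp
    rw [map_add, Finsupp.add_apply] at hp
    by_cases h : PA.basis.repr y p = 0
    · exact hz p (by simpa [h] using hp)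
    · exact hy p h
  smul_mem' := by
    intro c y hy p hp
    rw [map_smul, Finsupp.smul_apply] at hp
    exact hy p fun h => hp (by simp [h])

lemma mem_lenIdeal {n : ℕ} {y : A} :
    y ∈ lenIdeal PA n ↔ ∀ p : GPath G, PA.basis.repr y p ≠ 0 → n ≤ p.length :=
  Iff.rfl

lemma lenIdeal_mono {m n : ℕ} (h : m ≤ n) : lenIdeal PA n ≤ lenIdeal PA m :=
  fun y hy p hp => h.trans (hy p hp)

lemma basis_mem_lenIdeal (p : GPath G) : PA.basis p ∈ lenIdeal PA p.length := by
  classical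
  intro q hq
  rw [Module.Basis.repr_self, Finsupp.single_apply] at hq
  rcases eq_or_ne p q with rfl | hne
  · exact le_refl _
  · simp [hne] at hq

lemma basis_mul_basis_mem (q p : GPath G) :
    PA.basis q * PA.basis p ∈ lenIdeal PA (q.length + p.length) := by
  by_cases h : q.rng = p.src
  · rw [PA.mul_comp q p h]
    have h2 := basis_mem_lenIdeal PA (q.comp p h)
    rwa [GPath.comp_length] at h2
  · rw [PA.mul_ncomp q p h]; exact zero_mem _

lemma repr_sum_eq (y : A) :
    (PA.basis.repr y).sum (fun p c => c • PA.basis p) = y := by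
  rw [← Finsupp.linearCombination_apply]
  exact PA.basis.linearCombination_repr y

lemma mul_basis_mem {m : ℕ} {a : A} (hm : a ∈ lenIdeal PA m) (p : GPath G) :
    a * PA.basis p ∈ lenIdeal PA (m + p.length) := by
  have h : a * PA.basis p
      = (PA.basis.repr a).sum fun q c => c • (PA.basis q * PA.basis p) := by
    conv_lhs => rw [← repr_sum_eq PA a]
    rw [Finsupp.sum, Finsupp.sum, Finset.sum_mul]
    exact Finset.sum_congr rfl fun q _ => smul_mul_assoc _ _ _
  rw [h, Finsupp.sum]
  refine Submodule.sum_mem _ fun q hq => Submodule.smul_mem _ _ ?_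
  refine lenIdeal_mono PA ?_ (basis_mul_basis_mem PA q p)
  exact Nat.add_le_add_right (hm q (Finsupp.mem_support_iff.mp hq)) _

lemma mul_mem_lenIdeal {m n : ℕ} {a y : A} (hm : a ∈ lenIdeal PA m)
    (hn : y ∈ lenIdeal PA n) : a * y ∈ lenIdeal PA (m + n) := by
  have h : a * y = (PA.basis.repr y).sum fun p c => c • (a * PA.basis p) := by
    conv_lhs => rw [← repr_sum_eq PA y]
    rw [Finsupp.sum, Finsupp.sum, Finset.mul_sum]
    exact Finset.sum_congr rfl fun p _ => mul_smul_comm _ _ _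
  rw [h, Finsupp.sum]
  refine Submodule.sum_mem _ fun p hp => Submodule.smul_mem _ _ ?_
  refine lenIdeal_mono PA ?_ (mul_basis_mem PA hm p)
  exact Nat.add_le_add_left (hn p (Finsupp.mem_support_iff.mp hp)) _

lemma mem_lenIdeal_zero (a : A) : a ∈ lenIdeal PA 0 := fun _ _ => Nat.zero_le _

end Stmt10Aux

section Stmt10Aux2
set_option linter.unusedSectionVars false
set_option linter.unusedVariables false
attribute [local instance] Classical.propDecidable

open DGraph

variable {K : Type} [Field K] {G : DGraph} {A : Type} [NonUnitalRing A]
  [Module K A] [SMulCommClass K A A] [IsScalarTower K A A] (PA : PathAlgebraOn K G A)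

lemma rng_inl (v : G.V) : GPath.rng (G := G) (Sum.inl v) = v := rfl
lemma src_inl (v : G.V) : GPath.src (G := G) (Sum.inl v) = v := rfl

lemma comp_inl (v : G.V) (q : GPath G) (h : GPath.rng (G := G) (Sum.inl v) = q.src) :
    GPath.comp (Sum.inl v) q h = q := by
  cases q <;> rfl

lemma rng_ofEdge (e : G.Edge) : (GPath.ofEdge (G := G) e).rng = G.r e := by
  simp [GPath.ofEdge, GPath.rng]

lemma vertex_mul_basis (v : G.V) (p : GPath G) :
    PA.basis (Sum.inl v) * PA.basis p = if p.src = v then PA.basis p else 0 := by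
  by_cases h : p.src = v
  · have hcomp : GPath.rng (G := G) (Sum.inl v) = p.src := by rw [rng_inl, h]
    rw [PA.mul_comp _ _ hcomp, comp_inl, if_pos h]
  · have hnc : GPath.rng (G := G) (Sum.inl v) ≠ p.src := by
      rw [rng_inl]; exact fun hc => h hc.symm
    rw [PA.mul_ncomp _ _ hnc, if_neg h]

lemma basis_mul_basis_source {v : G.V} (hv : ∀ e : G.Edge, G.r e ≠ v)
    {p : GPath G} (hp : p.src = v) (q : GPath G) :
    PA.basis q * PA.basis p = if q = Sum.inl v then PA.basis p else 0 := by
  cases q with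
  | inl w =>
    by_cases hw : w = v
    · subst hw
      have hcomp : GPath.rng (G := G) (Sum.inl w) = p.src := by rw [rng_inl, hp]
      rw [PA.mul_comp _ _ hcomp, comp_inl]; exact (if_pos rfl).symm
    · have hnc : GPath.rng (G := G) (Sum.inl w) ≠ p.src := by
        rw [rng_inl, hp]; exact hw
      rw [PA.mul_ncomp _ _ hnc]; exact (if_neg (fun hc => hw (Sum.inl.inj hc))).symm
  | inr l =>
    have hnc : GPath.rng (G := G) (Sum.inr l) ≠ p.src := by
      rw [hp]; exact hv _
    rw [PA.mul_ncomp _ _ hnc, if_neg (by simp)]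

lemma mul_basis_of_source {v : G.V} (hv : ∀ e : G.Edge, G.r e ≠ v)
    {p : GPath G} (hp : p.src = v) (a : A) :
    a * PA.basis p = PA.basis.repr a (Sum.inl v) • PA.basis p := by
  calc a * PA.basis p
      = (PA.basis.repr a).sum fun q c => c • (if q = Sum.inl v then PA.basis p else 0) := by
        conv_lhs => rw [← repr_sum_eq PA a]
        simp only [Finsupp.sum, Finset.sum_mul, smul_mul_assoc,
          basis_mul_basis_source PA hv hp]
    _ = PA.basis.repr a (Sum.inl v) • PA.basis p := by
        simp only [Finsupp.sum, smul_ite, smul_zero]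
        have hcol := Finset.sum_eq_single (s := (PA.basis.repr a).support)
          (f := fun q => if q = Sum.inl v then PA.basis.repr a q • PA.basis p else 0)
          (Sum.inl v)
          (fun b _ hne => if_neg hne)
          (fun h => by
            simp [Finsupp.notMem_support_iff.mp h])
        rw [hcol]
        exact if_pos rfl

lemma mul_sourceSupported {v : G.V} {x : A} (hx : SourceSupported PA v x) (a : A) :
    a * x = PA.basis.repr a (Sum.inl v) • x := by
  obtain ⟨hv, hsrc⟩ := hx
  conv_lhs => rw [← repr_sum_eq PA x]
  conv_rhs => rw [← repr_sum_eq PA x]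
  simp only [Finsupp.sum, Finset.mul_sum, Finset.smul_sum]
  refine Finset.sum_congr rfl fun p hp => ?_
  rw [mul_smul_comm,
    mul_basis_of_source PA hv (hsrc p (Finsupp.mem_support_iff.mp hp)) a,
    smul_smul, smul_smul, mul_comm]

lemma vertex_mul (v : G.V) (y : A) :
    PA.basis (Sum.inl v) * y
      = PA.basis.repr.symm ((PA.basis.repr y).filter fun p => p.src = v) := by
  set y₁ : A := PA.basis.repr.symm ((PA.basis.repr y).filter fun p => p.src = v) with hy₁
  have hr1 : PA.basis.repr y₁ = (PA.basis.repr y).filter fun p => p.src = v := by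
    rw [hy₁, LinearEquiv.apply_symm_apply]
  have h1 : PA.basis (Sum.inl v) * y₁ = y₁ := by
    conv_lhs => rw [← repr_sum_eq PA y₁]
    conv_rhs => rw [← repr_sum_eq PA y₁]
    simp only [Finsupp.sum, Finset.mul_sum]
    refine Finset.sum_congr rfl fun p hp => ?_
    have hsrc : p.src = v := by
      have hne := Finsupp.mem_support_iff.mp hp
      rw [hr1, Finsupp.filter_apply] at hne
      by_contra hc
      simp [hc] at hne
    rw [mul_smul_comm, vertex_mul_basis, if_pos hsrc]
  have h2 : PA.basis (Sum.inl v) * (y - y₁) = 0 := by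
    have hr2 : ∀ p : GPath G, PA.basis.repr (y - y₁) p ≠ 0 → p.src ≠ v := by
      intro p hne hsrc
      rw [map_sub, Finsupp.sub_apply, hr1, Finsupp.filter_apply, if_pos hsrc,
        sub_self] at hne
      exact hne rfl
    conv_lhs => rw [← repr_sum_eq PA (y - y₁)]
    simp only [Finsupp.sum, Finset.mul_sum]
    refine Finset.sum_eq_zero fun p hp => ?_
    rw [mul_smul_comm, vertex_mul_basis,
      if_neg (hr2 p (Finsupp.mem_support_iff.mp hp)), smul_zero]
  calc PA.basis (Sum.inl v) * y
      = PA.basis (Sum.inl v) * y₁ + PA.basis (Sum.inl v) * (y - y₁) := by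
        rw [← mul_add, add_sub_cancel]
    _ = y₁ := by rw [h1, h2, add_zero]

lemma repr_vertex_mul (v : G.V) (y : A) (p : GPath G) :
    PA.basis.repr (PA.basis (Sum.inl v) * y) p
      = if p.src = v then PA.basis.repr y p else 0 := by
  rw [vertex_mul, LinearEquiv.apply_symm_apply, Finsupp.filter_apply]

/-- Total function prepending an edge to a path. -/
noncomputable def econs (e : G.Edge) (p : GPath G) : GPath G :=
  if h : (GPath.ofEdge (G := G) e).rng = p.src
  then (GPath.ofEdge e).comp p h else GPath.ofEdge e

lemma econs_eq {e : G.Edge} {p : GPath G} (h : (GPath.ofEdge (G := G) e).rng = p.src) :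
    econs e p = (GPath.ofEdge e).comp p h := dif_pos h

lemma length_ofEdge (e : G.Edge) : (GPath.ofEdge (G := G) e).length = 1 := rfl

lemma econs_length {e : G.Edge} {p : GPath G} (h : (GPath.ofEdge (G := G) e).rng = p.src) :
    (econs e p).length = 1 + p.length := by
  rw [econs_eq h, GPath.comp_length, length_ofEdge]

lemma econs_inj (e : G.Edge) {v : G.V} {p p' : GPath G} (hre : G.r e = v)
    (hp : p.src = v) (hp' : p'.src = v) (h : econs e p = econs e p') : p = p' := by
  have h1 : (GPath.ofEdge (G := G) e).rng = p.src := by rw [rng_ofEdge, hre, hp]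
  have h2 : (GPath.ofEdge (G := G) e).rng = p'.src := by rw [rng_ofEdge, hre, hp']
  rw [econs_eq h1, econs_eq h2] at h
  cases p with
  | inl w =>
    cases p' with
    | inl w' =>
      rw [src_inl] at hp; rw [src_inl] at hp'
      rw [hp, hp']
    | inr m =>
      exfalso
      have hl := congrArg GPath.length h
      erw [GPath.comp_length, GPath.comp_length, length_ofEdge] at hl
      simp only [GPath.length] at hl
      have : m.1.length = 0 := by omega
      exact m.2.1 (List.length_eq_zero_iff.mp this)
  | inr l =>
    cases p' with
    | inl w' =>
      exfalso
      have hl := congrArg GPath.length h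
      erw [GPath.comp_length, GPath.comp_length, length_ofEdge] at hl
      simp only [GPath.length] at hl
      have : l.1.length = 0 := by omega
      exact l.2.1 (List.length_eq_zero_iff.mp this)
    | inr m =>
      simp only [GPath.comp, GPath.ofEdge] at h
      injection h with h'
      have hlist : e :: l.1 = e :: m.1 := by
        simpa using congrArg Subtype.val h'
      have : l.1 = m.1 := by simpa using hlist
      exact congrArg Sum.inr (Subtype.ext this)

lemma edge_mul_eq (e : G.Edge) {v : G.V} {x : A} (hre : G.r e = v)
    (hsupp : ∀ p : GPath G, PA.basis.repr x p ≠ 0 → p.src = v) :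
    PA.basis (GPath.ofEdge e) * x
      = (PA.basis.repr x).sum fun p c => c • PA.basis (econs e p) := by
  conv_lhs => rw [← repr_sum_eq PA x]
  simp only [Finsupp.sum, Finset.mul_sum]
  refine Finset.sum_congr rfl fun p hp => ?_
  have hsrc := hsupp p (Finsupp.mem_support_iff.mp hp)
  have hcomp : (GPath.ofEdge (G := G) e).rng = p.src := by rw [rng_ofEdge, hre, hsrc]
  rw [mul_smul_comm, PA.mul_comp _ _ hcomp, econs_eq hcomp]

lemma repr_edge_mul (e : G.Edge) {v : G.V} {x : A} (hre : G.r e = v)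
    (hsupp : ∀ p : GPath G, PA.basis.repr x p ≠ 0 → p.src = v)
    {p₁ : GPath G} (h₁ : PA.basis.repr x p₁ ≠ 0) :
    PA.basis.repr (PA.basis (GPath.ofEdge e) * x) (econs e p₁) = PA.basis.repr x p₁ := by
  rw [edge_mul_eq PA e hre hsupp, map_finsuppSum, Finsupp.sum_apply]
  simp only [map_smul, Module.Basis.repr_self, Finsupp.smul_apply, Finsupp.single_apply,
    smul_eq_mul, mul_ite, mul_one, mul_zero]
  rw [Finsupp.sum]
  have hmem : p₁ ∈ (PA.basis.repr x).support := Finsupp.mem_support_iff.mpr h₁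
  have hcol := Finset.sum_eq_single_of_mem (f := fun p =>
      if econs e p = econs e p₁ then PA.basis.repr x p else 0) p₁ hmem
    (fun b hb hne => by
      rw [if_neg]
      intro hc
      exact hne (econs_inj e hre (hsupp b (Finsupp.mem_support_iff.mp hb))
        (hsupp p₁ h₁) hc))
  rw [hcol]
  rw [if_pos rfl]

end Stmt10Aux2

section Stmt10Aux3
set_option linter.unusedSectionVars false
set_option linter.unusedVariables false
attribute [local instance] Classical.propDecidable

open DGraph

variable {K : Type} [Field K] {G : DGraph} {A : Type} [NonUnitalRing A]
  [Module K A] [SMulCommClass K A A] [IsScalarTower K A A] (PA : PathAlgebraOn K G A)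

lemma span_isLeftIdeal {v : G.V} {x : A} (hx : SourceSupported PA v x) :
    IsLeftIdeal K A (Submodule.span K {x}) := by
  intro a y hy
  rw [Submodule.mem_span_singleton] at hy ⊢
  obtain ⟨c, rfl⟩ := hy
  refine ⟨c * PA.basis.repr a (Sum.inl v), ?_⟩
  rw [mul_smul_comm, mul_sourceSupported PA hx a, smul_smul]

lemma span_singleton_min {x : A} (hx : x ≠ 0) (T : Submodule K A)
    (hT : T ≤ Submodule.span K {x}) (hbot : T ≠ ⊥) : T = Submodule.span K {x} := by
  obtain ⟨y, hyT, hy0⟩ := (Submodule.ne_bot_iff T).mp hbot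
  obtain ⟨c, rfl⟩ := Submodule.mem_span_singleton.mp (hT hyT)
  have hc : c ≠ 0 := fun h => hy0 (by rw [h, zero_smul])
  refine le_antisymm hT ?_
  rw [Submodule.span_singleton_le_iff_mem]
  have hx' : x = c⁻¹ • (c • x) := by rw [smul_smul, inv_mul_cancel₀ hc, one_smul]
  rw [hx']
  exact T.smul_mem _ hyT

lemma minimal_fwd {S : Submodule K A} (hS : IsMinimalLeftIdeal K A S) :
    ∃ (x : A) (v : G.V), x ≠ 0 ∧ SourceSupported PA v x ∧ S = Submodule.span K {x} := by
  obtain ⟨hleft, hbot, hmin⟩ := hS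
  obtain ⟨y, hyS, hy0⟩ := (Submodule.ne_bot_iff S).mp hbot
  obtain ⟨p₀, hp₀⟩ : ∃ p, PA.basis.repr y p ≠ 0 := by
    by_contra hall
    push_neg at hall
    apply hy0
    have hr : PA.basis.repr y = 0 := Finsupp.ext fun p => by simp [hall p]
    have h2 := congrArg PA.basis.repr.symm hr
    rwa [LinearEquiv.symm_apply_apply, map_zero] at h2
  set v := p₀.src with hv
  set x := PA.basis (Sum.inl v) * y with hxdef
  have hxp₀ : PA.basis.repr x p₀ = PA.basis.repr y p₀ := by
    rw [hxdef, repr_vertex_mul, if_pos hv.symm]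
  have hx0 : x ≠ 0 := fun h => hp₀ (by rw [← hxp₀, h, map_zero, Finsupp.zero_apply])
  have hxS : x ∈ S := hleft _ y hyS
  have hsupp : ∀ p : GPath G, PA.basis.repr x p ≠ 0 → p.src = v := by
    intro p hp
    by_contra hc
    rw [hxdef, repr_vertex_mul, if_neg hc] at hp
    exact hp rfl
  have hsource : ∀ e : G.Edge, G.r e ≠ v := by
    by_contra hc
    push_neg at hc
    obtain ⟨e, hre⟩ := hc
    have hp₀x : p₀ ∈ (PA.basis.repr x).support :=
      Finsupp.mem_support_iff.mpr (by rw [hxp₀]; exact hp₀)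
    set F := (PA.basis.repr x).support.image GPath.length with hF
    have hFne : F.Nonempty := ⟨p₀.length, Finset.mem_image_of_mem _ hp₀x⟩
    set n := F.min' hFne with hn
    have hxn : x ∈ lenIdeal PA n := by
      intro p hp
      exact F.min'_le _ (Finset.mem_image_of_mem _ (Finsupp.mem_support_iff.mpr hp))
    obtain ⟨p₁, hp₁mem, hp₁len⟩ : ∃ p₁, PA.basis.repr x p₁ ≠ 0 ∧ p₁.length = n := by
      obtain ⟨p₁, hp₁, hlen⟩ := Finset.mem_image.mp (F.min'_mem hFne)
      exact ⟨p₁, Finsupp.mem_support_iff.mp hp₁, hlen⟩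
    set z := PA.basis (GPath.ofEdge e) * x with hz
    have hz0 : z ≠ 0 := by
      have hzr := repr_edge_mul PA e hre hsupp hp₁mem
      intro h
      rw [← hz] at hzr
      rw [h, map_zero, Finsupp.zero_apply] at hzr
      exact hp₁mem hzr.symm
    have hzS : z ∈ S := hleft _ x hxS
    have hzlen : z ∈ lenIdeal PA (1 + n) := by
      have hb : PA.basis (GPath.ofEdge e) ∈ lenIdeal PA 1 := by
        have hbb := basis_mem_lenIdeal PA (GPath.ofEdge e)
        rwa [length_ofEdge] at hbb
      exact mul_mem_lenIdeal PA hb hxn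
    set T := S ⊓ lenIdeal PA (1 + n) with hT
    have hTleft : IsLeftIdeal K A T := by
      intro a w hw
      refine ⟨hleft a w hw.1, ?_⟩
      have hmm := mul_mem_lenIdeal PA (mem_lenIdeal_zero PA a) hw.2
      rwa [zero_add] at hmm
    have hTne : T ≠ ⊥ := by
      rw [Submodule.ne_bot_iff]
      exact ⟨z, ⟨hzS, hzlen⟩, hz0⟩
    rcases hmin T hTleft inf_le_left with h | h
    · exact hTne h
    · have hxT : x ∈ T := h.symm ▸ hxS
      have hlen := hxT.2 p₁ hp₁mem
      rw [hp₁len] at hlen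
      omega
  refine ⟨x, v, hx0, ⟨hsource, hsupp⟩, ?_⟩
  have hspan_le : Submodule.span K {x} ≤ S := by
    rw [Submodule.span_singleton_le_iff_mem]; exact hxS
  rcases hmin _ (span_isLeftIdeal PA ⟨hsource, hsupp⟩) hspan_le with h | h
  · exfalso
    refine hx0 ?_
    have hmem := Submodule.mem_span_singleton_self (R := K) x
    rw [h] at hmem
    simpa using hmem
  · exact h.symm

lemma minimal_rev {x : A} {v : G.V} (hx0 : x ≠ 0) (hss : SourceSupported PA v x) :
    IsMinimalLeftIdeal K A (Submodule.span K {x}) := by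
  refine ⟨span_isLeftIdeal PA hss, ?_, ?_⟩
  · rw [Submodule.ne_bot_iff]
    exact ⟨x, Submodule.mem_span_singleton_self (R := K) x, hx0⟩
  · intro T _ hle
    by_cases hT : T = ⊥
    · exact Or.inl hT
    · exact Or.inr (span_singleton_min (K := K) hx0 T hle hT)

end Stmt10Aux3

section Stmt10Aux4
set_option linter.unusedSectionVars false
set_option linter.unusedVariables false

open DGraph

variable {K : Type} [Field K] {G : DGraph} {A : Type} [NonUnitalRing A]
  [Module K A] [SMulCommClass K A A] [IsScalarTower K A A] (PA : PathAlgebraOn K G A)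

lemma iso_of_eq {x x' : A} {v : G.V} (hx0 : x ≠ 0) (hx'0 : x' ≠ 0)
    (hss : SourceSupported PA v x) (hss' : SourceSupported PA v x') :
    ∃ g : (Submodule.span K {x} : Submodule K A) ≃ₗ[K]
        (Submodule.span K {x'} : Submodule K A),
      ∀ (a : A) (m m' : (Submodule.span K {x} : Submodule K A)),
        (m' : A) = a * (m : A) → ((g m' : A) = a * (g m : A)) := by
  set e1 := LinearEquiv.toSpanNonzeroSingleton K A x hx0 with he1
  set e2 := LinearEquiv.toSpanNonzeroSingleton K A x' hx'0 with he2
  have hcoe1 : ∀ m : (Submodule.span K {x} : Submodule K A), (m : A) = (e1.symm m) • x := by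
    intro m
    have h := e1.apply_symm_apply m
    rw [he1, LinearEquiv.toSpanNonzeroSingleton_apply] at h
    exact (congrArg Subtype.val h).symm
  have hcoe2 : ∀ c : K, ((e2 c : (Submodule.span K {x'} : Submodule K A)) : A) = c • x' := by
    intro c
    rw [he2, LinearEquiv.toSpanNonzeroSingleton_apply]
  refine ⟨e1.symm.trans e2, ?_⟩
  intro a m m' hrel
  set c := e1.symm m with hcdef
  set c' := e1.symm m' with hc'def
  set k := PA.basis.repr a (Sum.inl v) with hk
  have hmx : (m : A) = c • x := hcoe1 m
  have hm'x : (m' : A) = c' • x := hcoe1 m'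
  have h1 : c' • x = (c * k) • x := by
    rw [← hm'x, hrel, hmx, mul_smul_comm, mul_sourceSupported PA hss a, ← hk, smul_smul]
  have hck : c' = c * k := smul_left_injective K hx0 h1
  have hg1 : ((e1.symm.trans e2) m : A) = c • x' := by
    rw [LinearEquiv.trans_apply, ← hcdef, hcoe2]
  have hg2 : ((e1.symm.trans e2) m' : A) = c' • x' := by
    rw [LinearEquiv.trans_apply, ← hc'def, hcoe2]
  rw [hg1, hg2, hck, mul_smul_comm, mul_sourceSupported PA hss' a, ← hk, smul_smul]

lemma eq_of_iso {x x' : A} {v v' : G.V} (hx0 : x ≠ 0) (hx'0 : x' ≠ 0)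
    (hss : SourceSupported PA v x) (hss' : SourceSupported PA v' x')
    (g : (Submodule.span K {x} : Submodule K A) ≃ₗ[K]
        (Submodule.span K {x'} : Submodule K A))
    (hg : ∀ (a : A) (m m' : (Submodule.span K {x} : Submodule K A)),
        (m' : A) = a * (m : A) → ((g m' : A) = a * (g m : A))) : v = v' := by
  classical
  by_contra hvv
  set m : (Submodule.span K {x} : Submodule K A) :=
    ⟨x, Submodule.mem_span_singleton_self (R := K) x⟩ with hm
  have hx_eq : (m : A) = PA.basis (Sum.inl v) * (m : A) := by
    show x = PA.basis (Sum.inl v) * x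
    erw [mul_sourceSupported PA hss, Module.Basis.repr_self, Finsupp.single_apply, if_pos rfl,
      one_smul]
  have hgm := hg (PA.basis (Sum.inl v)) m m hx_eq
  obtain ⟨c, hc⟩ := Submodule.mem_span_singleton.mp (g m).2
  have hc0 : c ≠ 0 := by
    intro h
    rw [h, zero_smul] at hc
    have hgm0 : g m = 0 := Subtype.ext hc.symm
    have hm0 : m = 0 := by
      apply g.injective
      rw [hgm0, map_zero]
    exact hx0 (congrArg Subtype.val hm0)
  erw [← hc, mul_smul_comm, mul_sourceSupported PA hss', Module.Basis.repr_self,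
    Finsupp.single_apply, if_neg (fun hh => hvv (Sum.inl.inj hh)), zero_smul, smul_zero]
    at hgm
  exact hx'0 ((smul_eq_zero.mp hgm).resolve_left hc0)

end Stmt10Aux4
/-- the minimal left ideals of a path algebra are exactly the lines `Kx`
with `x` a combination of paths with common source a source-vertex `v`; two such are
isomorphic as left modules iff the source vertices coincide. -/
theorem stmt10 (K : Type) [Field K] (G : DGraph)
    (A : Type) [NonUnitalRing A] [Module K A] [SMulCommClass K A A] [IsScalarTower K A A]
    (PA : PathAlgebraOn K G A) :
    (∀ S : Submodule K A, IsMinimalLeftIdeal K A S ↔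
      ∃ (x : A) (v : G.V), x ≠ 0 ∧ SourceSupported PA v x ∧ S = Submodule.span K {x}) ∧
    (∀ (x x' : A) (v v' : G.V), x ≠ 0 → x' ≠ 0 →
      SourceSupported PA v x → SourceSupported PA v' x' →
      ((∃ g : (Submodule.span K {x} : Submodule K A) ≃ₗ[K]
              (Submodule.span K {x'} : Submodule K A),
          ∀ (a : A) (m m' : (Submodule.span K {x} : Submodule K A)),
            (m' : A) = a * (m : A) → ((g m' : A) = a * (g m : A))) ↔ v = v')) := by
  constructor
  · intro S
    constructor
    · exact fun h => minimal_fwd PA h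
    · rintro ⟨x, v, hx0, hss, rfl⟩
      exact minimal_rev PA hx0 hss
  · intro x x' v v' hx0 hx'0 hss hss'
    constructor
    · rintro ⟨g, hg⟩
      exact eq_of_iso PA hx0 hx'0 hss hss' g hg
    · rintro rfl
      exact iso_of_eq PA hx0 hx'0 hss hss'
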